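/- arXiv:math/9507220 — 4 statements merged into one kernel-verified Lean document; each statement's English description precedes it below -/
import Mathlib

section
/- Dodgson's condensation rule: For any n×n matrix A (n ≥ 2) over a field, if the central (n-2)×(n-2) minor (the determinant of the submatrix obtained by deleting the first and last rows and columns) is nonzero, then det(A) times that central minor equals det(A₁₁)·det(A₂₂) − det(A₁₂)·det(A₂₁), where Aᵢⱼ denotes the (n-1)×(n-1) submatrix of A whose upper-left corner is the (i,j) entry (i.e., A₁₁ deletes the last row and column, A₂₂ deletes the first row and column, A₁₂ deletes the last row and first column, A₂₁ deletes the first row and last column). -/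
open Matrix

theorem Matrix.map_det' {R S : Type*} [CommRing R] [CommRing S] {m : Type*} [DecidableEq m]
    [Fintype m] (f : R →+* S) (M : Matrix m m R) : (M.map f).det = f M.det :=
  (f.map_det M).symm

section Aux

variable {F : Type*} [Field F] (n : ℕ)

/-- The reindexing equivalence singling out the first and last indices. -/
noncomputable def dodgsonEquiv : (Fin 2 ⊕ Fin n) ≃ Fin (n + 2) :=
  Equiv.ofBijective
    (Sum.elim (fun a => if a = 0 then 0 else Fin.last (n + 1))
      (fun i : Fin n => i.succ.castSucc))
    (by
      rw [Fintype.bijective_iff_injective_and_card]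
      constructor
      · rintro (a | i) (b | j) h
        · fin_cases a <;> fin_cases b <;> simp_all
        · exfalso
          have := congrArg Fin.val h
          fin_cases a <;> simp [Fin.last, Fin.val_succ] at this <;> omega
        · exfalso
          have := congrArg Fin.val h
          fin_cases b <;> simp [Fin.last, Fin.val_succ] at this <;> omega
        · have := congrArg Fin.val h
          simp [Fin.val_succ] at this
          exact congrArg Sum.inr (Fin.ext this)
      · simp; omega)

lemma dodgsonEquiv_inl_zero : dodgsonEquiv n (Sum.inl 0) = 0 := by
  simp [dodgsonEquiv]

lemma dodgsonEquiv_inl_one : dodgsonEquiv n (Sum.inl 1) = Fin.last (n + 1) := by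
  simp [dodgsonEquiv]

lemma dodgsonEquiv_inr (i : Fin n) : dodgsonEquiv n (Sum.inr i) = i.succ.castSucc := by
  simp [dodgsonEquiv]

end Aux

theorem dodgson_aux {F : Type*} [Field F] (n : ℕ)
    (A : Matrix (Fin (n + 2)) (Fin (n + 2)) F) (hA : A.det ≠ 0) :
    A.det * (A.submatrix (fun i : Fin n => i.succ.castSucc)
        (fun j : Fin n => j.succ.castSucc)).det =
      (A.submatrix (Fin.castSucc : Fin (n + 1) → Fin (n + 2)) Fin.castSucc).det *
        (A.submatrix (Fin.succ : Fin (n + 1) → Fin (n + 2)) Fin.succ).det -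
      (A.submatrix (Fin.castSucc : Fin (n + 1) → Fin (n + 2)) Fin.succ).det *
        (A.submatrix (Fin.succ : Fin (n + 1) → Fin (n + 2)) Fin.castSucc).det := by
  classical
  set e := dodgsonEquiv n with he
  set A' : Matrix (Fin 2 ⊕ Fin n) (Fin 2 ⊕ Fin n) F := A.submatrix e e with hA'
  have hdetA' : A'.det = A.det := det_submatrix_equiv_self e A
  -- block matrices
  set P : Matrix (Fin 2) (Fin 2) F := of fun a b => adjugate A' (Sum.inl a) (Sum.inl b) with hP
  set Q : Matrix (Fin n) (Fin 2) F := of fun i b => adjugate A' (Sum.inr i) (Sum.inl b) with hQ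
  set Bm : Matrix (Fin 2) (Fin n) F := of fun a j => A' (Sum.inl a) (Sum.inr j) with hBm
  set Mm : Matrix (Fin n) (Fin n) F := of fun i j => A' (Sum.inr i) (Sum.inr j) with hMm
  set N : Matrix (Fin 2 ⊕ Fin n) (Fin 2 ⊕ Fin n) F := fromBlocks P 0 Q 1 with hN
  have key : A' * N = fromBlocks (A'.det • 1) Bm 0 Mm := by
    ext x y
    rcases y with b | c
    · have hcol : ∀ k, N k (Sum.inl b) = adjugate A' k (Sum.inl b) := by
        rintro (a | i) <;> rfl
      have : (A' * N) x (Sum.inl b) = (A' * adjugate A') x (Sum.inl b) := by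
        simp only [mul_apply, hcol]
      rw [this, mul_adjugate]
      rcases x with a | i <;>
        simp [fromBlocks, one_apply, Matrix.smul_apply, Sum.inl.injEq]
    · have hcol : ∀ k, A' x k * N k (Sum.inr c) =
          if k = Sum.inr c then A' x (Sum.inr c) else 0 := by
        rintro (a | i)
        · simp [hN, fromBlocks]
        · by_cases hic : i = c
          · subst hic; simp [hN, fromBlocks, one_apply]
          · simp [hN, fromBlocks, one_apply, hic, Sum.inr.injEq]
      have : (A' * N) x (Sum.inr c) = A' x (Sum.inr c) := by
        simp only [mul_apply, hcol]
        simp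
      rw [this]
      rcases x with a | i <;> rfl
  have hdetkey : A'.det * N.det = A'.det ^ 2 * Mm.det := by
    have := congrArg det key
    rw [det_mul, det_fromBlocks_zero₂₁] at this
    rw [this, det_smul, det_one, mul_one]
    simp [Fintype.card_fin, sq]
  have hdetN : N.det = P.det := by
    rw [hN, det_fromBlocks_zero₁₂, det_one, mul_one]
  have hcancel : P.det = A.det * Mm.det := by
    have h2 := hdetkey
    rw [hdetN, hdetA'] at h2
    apply mul_left_cancel₀ hA
    rw [h2]; ring
  have hMmeq : Mm = A.submatrix (fun i : Fin n => i.succ.castSucc)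
      (fun j : Fin n => j.succ.castSucc) := by
    ext i j
    show A (e (Sum.inr i)) (e (Sum.inr j)) = _
    rw [he, dodgsonEquiv_inr, dodgsonEquiv_inr]
    rfl
  have hadj : ∀ a b, P a b = adjugate A (e (Sum.inl a)) (e (Sum.inl b)) := by
    intro a b
    show adjugate A' (Sum.inl a) (Sum.inl b) = _
    rw [hA', adjugate_submatrix_equiv_self]
    rfl
  have hPdet : P.det = adjugate A 0 0 * adjugate A (Fin.last (n + 1)) (Fin.last (n + 1)) -
      adjugate A 0 (Fin.last (n + 1)) * adjugate A (Fin.last (n + 1)) 0 := by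
    rw [det_fin_two, hadj, hadj, hadj, hadj, he, dodgsonEquiv_inl_zero, dodgsonEquiv_inl_one]
  have e00 : adjugate A 0 0 = (A.submatrix Fin.succ Fin.succ).det := by
    rw [adjugate_fin_succ_eq_det_submatrix, Fin.succAbove_zero]
    simp
  have ell : adjugate A (Fin.last (n + 1)) (Fin.last (n + 1)) =
      (A.submatrix Fin.castSucc Fin.castSucc).det := by
    rw [adjugate_fin_succ_eq_det_submatrix, Fin.succAbove_last, Fin.val_last,
      Even.neg_one_pow ⟨n + 1, by ring⟩, one_mul]
  have e0l : adjugate A 0 (Fin.last (n + 1)) =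
      (-1) ^ (n + 1) * (A.submatrix Fin.castSucc Fin.succ).det := by
    rw [adjugate_fin_succ_eq_det_submatrix, Fin.succAbove_last, Fin.succAbove_zero]
    simp
  have el0 : adjugate A (Fin.last (n + 1)) 0 =
      (-1) ^ (n + 1) * (A.submatrix Fin.succ Fin.castSucc).det := by
    rw [adjugate_fin_succ_eq_det_submatrix, Fin.succAbove_last, Fin.succAbove_zero]
    simp
  have hsq : ((-1 : F) ^ (n + 1)) * ((-1 : F) ^ (n + 1)) = 1 := by
    rw [← pow_add]
    exact Even.neg_one_pow ⟨n + 1, by ring⟩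
  rw [← hMmeq, ← hcancel, hPdet, e00, ell, e0l, el0]
  linear_combination (-((A.submatrix Fin.castSucc Fin.succ).det *
    (A.submatrix Fin.succ Fin.castSucc).det)) * hsq

theorem dodgson_condensation_field {K : Type*} [Field K] (n : ℕ)
    (A : Matrix (Fin (n + 2)) (Fin (n + 2)) K)
    (h : (A.submatrix (fun i : Fin n => i.succ.castSucc)
          (fun j : Fin n => j.succ.castSucc)).det ≠ 0) :
    A.det * (A.submatrix (fun i : Fin n => i.succ.castSucc)
        (fun j : Fin n => j.succ.castSucc)).det =
      (A.submatrix (Fin.castSucc : Fin (n + 1) → Fin (n + 2)) Fin.castSucc).det *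
        (A.submatrix (Fin.succ : Fin (n + 1) → Fin (n + 2)) Fin.succ).det -
      (A.submatrix (Fin.castSucc : Fin (n + 1) → Fin (n + 2)) Fin.succ).det *
        (A.submatrix (Fin.succ : Fin (n + 1) → Fin (n + 2)) Fin.castSucc).det := by
  classical
  set B : Matrix (Fin (n + 2)) (Fin (n + 2)) (Polynomial K) := charmatrix (-A) with hB
  have hBdet : B.det ≠ 0 := (Matrix.charpoly_monic (-A)).ne_zero
  set L := FractionRing (Polynomial K)
  set φ : Polynomial K →+* L := algebraMap (Polynomial K) L with hφdef
  have hφ : Function.Injective φ := IsFractionRing.injective (Polynomial K) L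
  have hB'det : (B.map φ).det ≠ 0 := by
    rw [Matrix.map_det']
    intro h0
    exact hBdet (hφ (by rw [h0, map_zero]))
  have hL := dodgson_aux n (B.map φ) hB'det
  have hsub : ∀ {S : Type _} [CommRing S] (ψ : Polynomial K →+* S)
      {m : ℕ} (f g : Fin m → Fin (n + 2)),
      ((B.map ψ).submatrix f g).det = ψ ((B.submatrix f g).det) := by
    intro S _ ψ m f g
    rw [Matrix.submatrix_map, Matrix.map_det']
  have hpoly : B.det * (B.submatrix (fun i : Fin n => i.succ.castSucc)
        (fun j : Fin n => j.succ.castSucc)).det =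
      (B.submatrix (Fin.castSucc : Fin (n + 1) → Fin (n + 2)) Fin.castSucc).det *
        (B.submatrix (Fin.succ : Fin (n + 1) → Fin (n + 2)) Fin.succ).det -
      (B.submatrix (Fin.castSucc : Fin (n + 1) → Fin (n + 2)) Fin.succ).det *
        (B.submatrix (Fin.succ : Fin (n + 1) → Fin (n + 2)) Fin.castSucc).det := by
    apply hφ
    rw [_root_.map_mul, _root_.map_sub, _root_.map_mul, _root_.map_mul,
      ← hsub φ, ← hsub φ, ← hsub φ, ← hsub φ, ← hsub φ, ← Matrix.map_det']
    exact hL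
  set ψ : Polynomial K →+* K := Polynomial.evalRingHom 0 with hψdef
  have hBA : B.map ψ = A := by
    ext i j
    rcases eq_or_ne i j with rfl | hij
    · simp [hB, hψdef]
    · simp [hB, hij, hψdef]
  rw [← hBA, Matrix.map_det', hsub ψ, hsub ψ, hsub ψ, hsub ψ, hsub ψ,
    ← _root_.map_mul ψ, ← _root_.map_mul ψ, ← _root_.map_mul ψ, ← _root_.map_sub ψ]
  exact congrArg ψ hpoly
end

section
/- The right-hand side of MacMahon's identity satisfies the Dodgson recurrence: defining R_n(a,b) := (a+n)!!·(n-1)!!·(a-b-1)!!·b!! / ( a!!·(a-b+n-1)!!·(b+n)!! ) for natural numbers n ≥ 2 and b < a, one has R_n(a,b) · R_{n-2}(a+1,b+1) = R_{n-1}(a,b)·R_{n-1}(a+1,b+1) − R_{n-1}(a+1,b)·R_{n-1}(a,b+1). -/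
def superfactorial (m : ℕ) : ℕ := ∏ k ∈ Finset.range m, Nat.factorial (k + 1)

/-- `R n a b` is the right-hand side of MacMahon's identity. -/
def R (n a b : ℕ) : ℚ :=
  ((superfactorial (a + n) * superfactorial (n - 1) *
      superfactorial (a - b - 1) * superfactorial b : ℕ) : ℚ) /
    ((superfactorial a * superfactorial (a - b + n - 1) *
      superfactorial (b + n) : ℕ) : ℚ)

lemma sf_succ (k : ℕ) : superfactorial (k + 1) = superfactorial k * (k + 1).factorial := by
  simp [superfactorial, Finset.prod_range_succ]

lemma sf_pos (k : ℕ) : 0 < superfactorial k :=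
  Finset.prod_pos fun _ _ => Nat.factorial_pos _

lemma sf_ne (k : ℕ) : ((superfactorial k : ℕ) : ℚ) ≠ 0 := by
  exact_mod_cast (sf_pos k).ne'

lemma sf_pred (k : ℕ) : superfactorial (k + 1) * superfactorial (k - 1) =
    (k + 1) * superfactorial k ^ 2 := by
  cases k with
  | zero => simp [superfactorial]
  | succ j =>
      simp only [Nat.add_sub_cancel]
      rw [sf_succ (j + 1), sf_succ j, Nat.factorial_succ (j + 1)]
      ring

lemma sf_pred_q (k : ℕ) : ((superfactorial (k - 1) : ℕ) : ℚ) =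
    ((k : ℚ) + 1) * (superfactorial k : ℕ) ^ 2 / ((superfactorial (k + 1) : ℕ) : ℚ) := by
  rw [eq_div_iff (sf_ne _), mul_comm]
  exact_mod_cast sf_pred k

set_option maxHeartbeats 2000000 in
theorem macmahon_rhs_dodgson (n a b : ℕ) (hn : 2 ≤ n) (hba : b < a) :
    R n a b * R (n - 2) (a + 1) (b + 1) =
      R (n - 1) a b * R (n - 1) (a + 1) (b + 1) -
        R (n - 1) (a + 1) b * R (n - 1) a (b + 1) := by
  obtain ⟨m, rfl⟩ : ∃ m, n = m + 2 := ⟨n - 2, by omega⟩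
  obtain ⟨c, rfl⟩ : ∃ c, a = b + c + 1 := ⟨a - b - 1, by omega⟩
  simp only [R]
  rw [show b + c + 1 + (m + 2) = b + c + m + 2 + 1 by omega,
      show m + 2 - 1 = m + 1 by omega,
      show b + c + 1 - b - 1 = c by omega,
      show b + c + 1 - b + (m + 2) - 1 = c + m + 1 + 1 by omega,
      show b + (m + 2) = b + m + 2 by omega,
      show b + c + 1 + 1 + (m + 2 - 2) = b + c + m + 2 by omega,
      show m + 2 - 2 - 1 = m - 1 by omega,
      show b + c + 1 + 1 - (b + 1) - 1 = c by omega,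
      show b + c + 1 + 1 - (b + 1) + (m + 2 - 2) - 1 = c + m by omega,
      show b + 1 + (m + 2 - 2) = b + m + 1 by omega,
      show b + c + 1 + (m + 1) = b + c + m + 2 by omega,
      show m + 1 - 1 = m by omega,
      show b + c + 1 - b + (m + 1) - 1 = c + m + 1 by omega,
      show b + (m + 1) = b + m + 1 by omega,
      show b + c + 1 + 1 + (m + 1) = b + c + m + 2 + 1 by omega,
      show b + c + 1 + 1 - (b + 1) + (m + 1) - 1 = c + m + 1 by omega,
      show b + 1 + (m + 1) = b + m + 2 by omega,
      show b + c + 1 + 1 - b - 1 = c + 1 by omega,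
      show b + c + 1 + 1 - b + (m + 1) - 1 = c + m + 1 + 1 by omega,
      show b + c + 1 - (b + 1) - 1 = c - 1 by omega,
      show b + c + 1 - (b + 1) + (m + 1) - 1 = c + m by omega]
  have key : ∀ x y z : ℕ,
      ((superfactorial x * superfactorial y * superfactorial z : ℕ) : ℚ) ≠ 0 := fun x y z => by
    exact_mod_cast (Nat.mul_pos (Nat.mul_pos (sf_pos x) (sf_pos y)) (sf_pos z)).ne'
  rw [div_mul_div_comm, div_mul_div_comm, div_mul_div_comm,
    div_sub_div _ _ (mul_ne_zero (key _ _ _) (key _ _ _)) (mul_ne_zero (key _ _ _) (key _ _ _)),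
    div_eq_div_iff (mul_ne_zero (key _ _ _) (key _ _ _))
      (mul_ne_zero (mul_ne_zero (key _ _ _) (key _ _ _))
        (mul_ne_zero (key _ _ _) (key _ _ _)))]
  rw [sf_succ (b + c + m + 2), sf_succ (c + m + 1), sf_succ (c + m)]
  push_cast
  rw [sf_pred_q m, sf_pred_q c]
  field_simp [sf_ne]
  rw [Nat.factorial_succ (c + m + 1)]
  push_cast
  have h1 := sf_ne (m + 1)
  have h2 := sf_ne (c + 1)
  field_simp
  ring
end

section
/- Positivity of MacMahon's determinant: for natural numbers a, b, n with b < a, the determinant det[C(a+i, b+j)]_{1≤i,j≤n} is a positive rational (in particular nonzero), being equal to (a+n)!!·(n-1)!!·(a-b-1)!!·b!! / ( a!!·(a-b+n-1)!!·(b+n)!! ), a quotient of products of factorials. -/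
lemma superfactorial_eq (m : ℕ) : superfactorial m = Nat.superFactorial m :=
  Nat.prod_range_factorial_succ m

lemma superfactorial_pos (m : ℕ) : 0 < superfactorial m :=
  Finset.prod_pos fun k _ => Nat.factorial_pos (k + 1)

lemma superfactorial_add (m n : ℕ) :
    superfactorial (m + n) = superfactorial m * ∏ j ∈ Finset.range n, Nat.factorial (m + j + 1) := by
  induction n with
  | zero => simp
  | succ n ih =>
    rw [← Nat.add_assoc, superfactorial, Finset.prod_range_succ, ← superfactorial, ih,
      Finset.prod_range_succ, Nat.mul_assoc]

lemma descFactorial_add (m k l : ℕ) :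
    m.descFactorial (k + l) = m.descFactorial k * (m - k).descFactorial l := by
  induction l with
  | zero => simp
  | succ l ih =>
    rw [← Nat.add_assoc, Nat.descFactorial_succ, Nat.descFactorial_succ, ih]
    have : m - (k + l) = m - k - l := by omega
    rw [this]; ring

lemma entry_nat (a b i j : ℕ) (hba : b < a) :
    (a + i + 1).choose (b + j + 1) * (b + j + 1).factorial =
      (a + i + 1).choose (b + 1) * (b + 1).factorial * (a - b + i).descFactorial j := by
  have h1 := descFactorial_add (a + i + 1) (b + 1) j
  rw [Nat.descFactorial_eq_factorial_mul_choose, Nat.descFactorial_eq_factorial_mul_choose] at h1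
  have e : a + i + 1 - (b + 1) = a - b + i := by omega
  have e2 : b + 1 + j = b + j + 1 := by omega
  rw [e, e2] at h1
  calc (a + i + 1).choose (b + j + 1) * (b + j + 1).factorial
      = (b + j + 1).factorial * (a + i + 1).choose (b + j + 1) := by ring
    _ = (b + 1).factorial * (a + i + 1).choose (b + 1) * (a - b + i).descFactorial j := h1
    _ = _ := by ring

theorem macmahon_det_pos (a b n : ℕ) (hba : b < a) :
    0 < Matrix.det (fun i j : Fin n =>
        ((Nat.choose (a + i + 1) (b + j + 1) : ℕ) : ℚ)) ∧
      Matrix.det (fun i j : Fin n =>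
        ((Nat.choose (a + i + 1) (b + j + 1) : ℕ) : ℚ)) =
        ((superfactorial (a + n) * superfactorial (n - 1) *
            superfactorial (a - b - 1) * superfactorial b : ℕ) : ℚ) /
          ((superfactorial a * superfactorial (a - b + n - 1) *
            superfactorial (b + n) : ℕ) : ℚ) := by
  -- the vandermonde value
  have hvand : (Matrix.vandermonde (fun i : Fin n => ((a - b + (i : ℕ) : ℕ) : ℚ))).det
      = ((superfactorial (n - 1) : ℕ) : ℚ) := by
    have hshift : (Matrix.vandermonde (fun i : Fin n => ((a - b + (i : ℕ) : ℕ) : ℚ))).det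
        = (Matrix.vandermonde (fun i : Fin n => ((i : ℕ) : ℚ))).det := by
      rw [Matrix.det_vandermonde, Matrix.det_vandermonde]
      refine Finset.prod_congr rfl fun i _ => Finset.prod_congr rfl fun j _ => ?_
      push_cast; ring
    rw [hshift]
    match n with
    | 0 => simp [Matrix.det_isEmpty, superfactorial]
    | (m + 1) =>
      rw [Matrix.det_vandermonde_id_eq_superFactorial (R := ℚ) m, superfactorial_eq]
      norm_num
  -- entrywise factorization over ℚ
  have hfac : ∀ j : ℕ, (((b + j + 1).factorial : ℕ) : ℚ) ≠ 0 := by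
    intro j
    exact_mod_cast (Nat.factorial_pos (b + j + 1)).ne'
  have hM : ∀ (i j : Fin n), ((Nat.choose (a + i + 1) (b + j + 1) : ℕ) : ℚ)
      = (((a + (i : ℕ) + 1).choose (b + 1) : ℕ) : ℚ) *
        (((((b + 1).factorial : ℕ) : ℚ) / (((b + (j : ℕ) + 1).factorial : ℕ) : ℚ)) *
          (descPochhammer ℚ (j : ℕ)).eval (((a - b + (i : ℕ) : ℕ)) : ℚ)) := by
    intro i j
    rw [descPochhammer_eval_eq_descFactorial]
    have h := congrArg (Nat.cast : ℕ → ℚ) (entry_nat a b i j hba)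
    push_cast at h ⊢
    field_simp
    linear_combination h
  -- determinant factorization
  set D := Matrix.det (fun i j : Fin n => ((Nat.choose (a + i + 1) (b + j + 1) : ℕ) : ℚ)) with hD
  have h1 : D = (∏ i ∈ Finset.range n, (((a + i + 1).choose (b + 1) : ℕ) : ℚ)) *
      ((∏ j ∈ Finset.range n,
          ((((b + 1).factorial : ℕ) : ℚ) / (((b + j + 1).factorial : ℕ) : ℚ))) *
        ((superfactorial (n - 1) : ℕ) : ℚ)) := by
    have step : D = (Matrix.of fun i j : Fin n =>
        ((((a + (i : ℕ) + 1).choose (b + 1) : ℕ) : ℚ)) *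
        ((Matrix.of fun i j : Fin n =>
          (((((b + 1).factorial : ℕ) : ℚ) / (((b + (j : ℕ) + 1).factorial : ℕ) : ℚ)) *
            ((Matrix.of fun i j : Fin n =>
              (descPochhammer ℚ (j : ℕ)).eval (((a - b + (i : ℕ) : ℕ)) : ℚ)) i j))) i j)).det := by
      rw [hD]; congr 1; funext i j; simpa using hM i j
    rw [step, Matrix.det_mul_column, Matrix.det_mul_row,
      ← Matrix.det_eval_matrixOfPolynomials_eq_det_vandermonde
        (fun i : Fin n => ((a - b + (i : ℕ) : ℕ) : ℚ)) (fun j : Fin n => descPochhammer ℚ (j : ℕ))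
        (fun j => descPochhammer_natDegree ℚ (j : ℕ)) (fun j => monic_descPochhammer ℚ (j : ℕ)),
      hvand, Fin.prod_univ_eq_prod_range (fun i => (((a + i + 1).choose (b + 1) : ℕ) : ℚ)) n,
      Fin.prod_univ_eq_prod_range
        (fun j => ((((b + 1).factorial : ℕ) : ℚ) / (((b + j + 1).factorial : ℕ) : ℚ))) n]
  -- simplify to single product
  have h2 : D = ((superfactorial (n - 1) : ℕ) : ℚ) *
      ∏ j ∈ Finset.range n, ((((a + j + 1).factorial : ℕ) : ℚ) /
        ((((a - b + j).factorial : ℕ) : ℚ) * (((b + j + 1).factorial : ℕ) : ℚ))) := by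
    rw [h1, ← mul_assoc, ← Finset.prod_mul_distrib]
    rw [mul_comm]
    congr 1
    refine Finset.prod_congr rfl fun j _ => ?_
    rw [Nat.cast_choose ℚ (show b + 1 ≤ a + j + 1 by omega)]
    have e : a + j + 1 - (b + 1) = a - b + j := by omega
    rw [e]
    have h3 : (((a - b + j).factorial : ℕ) : ℚ) ≠ 0 := by
      exact_mod_cast (Nat.factorial_pos (a - b + j)).ne'
    have h4 : (((b + 1).factorial : ℕ) : ℚ) ≠ 0 := by
      exact_mod_cast (Nat.factorial_pos (b + 1)).ne'
    field_simp
  -- compute the RHS superfactorial expression to the same form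
  have hsa : superfactorial (a + n) = superfactorial a * ∏ j ∈ Finset.range n, (a + j + 1).factorial :=
    superfactorial_add a n
  have hsb : superfactorial (b + n) = superfactorial b * ∏ j ∈ Finset.range n, (b + j + 1).factorial :=
    superfactorial_add b n
  have hsc : superfactorial (a - b + n - 1) =
      superfactorial (a - b - 1) * ∏ j ∈ Finset.range n, (a - b + j).factorial := by
    have e : a - b + n - 1 = (a - b - 1) + n := by omega
    rw [e, superfactorial_add]
    congr 1
    refine Finset.prod_congr rfl fun j _ => ?_
    congr 1
    omega
  have hPa : (0:ℚ) < ((∏ j ∈ Finset.range n, (a + j + 1).factorial : ℕ) : ℚ) := by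
    exact_mod_cast Finset.prod_pos fun j _ => Nat.factorial_pos _
  have hPb : (0:ℚ) < ((∏ j ∈ Finset.range n, (b + j + 1).factorial : ℕ) : ℚ) := by
    exact_mod_cast Finset.prod_pos fun j _ => Nat.factorial_pos _
  have hPc : (0:ℚ) < ((∏ j ∈ Finset.range n, (a - b + j).factorial : ℕ) : ℚ) := by
    exact_mod_cast Finset.prod_pos fun j _ => Nat.factorial_pos _
  have hs1 : (0:ℚ) < (superfactorial a : ℚ) := by exact_mod_cast superfactorial_pos a
  have hs2 : (0:ℚ) < (superfactorial b : ℚ) := by exact_mod_cast superfactorial_pos b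
  have hs3 : (0:ℚ) < (superfactorial (a - b - 1) : ℚ) := by
    exact_mod_cast superfactorial_pos (a - b - 1)
  have heq : D = ((superfactorial (a + n) * superfactorial (n - 1) *
      superfactorial (a - b - 1) * superfactorial b : ℕ) : ℚ) /
        ((superfactorial a * superfactorial (a - b + n - 1) * superfactorial (b + n) : ℕ) : ℚ) := by
    rw [h2, hsa, hsb, hsc]
    push_cast
    rw [Finset.prod_div_distrib]
    have hprodmul : ∏ j ∈ Finset.range n,
        ((((a - b + j).factorial : ℕ) : ℚ) * (((b + j + 1).factorial : ℕ) : ℚ)) =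
        ((∏ j ∈ Finset.range n, (a - b + j).factorial : ℕ) : ℚ) *
        ((∏ j ∈ Finset.range n, (b + j + 1).factorial : ℕ) : ℚ) := by
      rw [Finset.prod_mul_distrib]; push_cast; ring
    rw [hprodmul]
    push_cast
    field_simp
  refine ⟨?_, heq⟩
  rw [heq]
  apply div_pos
  · exact_mod_cast Nat.mul_pos (Nat.mul_pos (Nat.mul_pos (superfactorial_pos _)
      (superfactorial_pos _)) (superfactorial_pos _)) (superfactorial_pos _)
  · exact_mod_cast Nat.mul_pos (Nat.mul_pos (superfactorial_pos _)
      (superfactorial_pos _)) (superfactorial_pos _)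
end

section
/- Polynomial form of Dodgson condensation: for any n×n matrix A (n ≥ 2) over a commutative ring, det(A)·det(A_{n-2}(2,2)) = det(A_{n-1}(1,1))·det(A_{n-1}(2,2)) − det(A_{n-1}(1,2))·det(A_{n-1}(2,1)), where A_r(k,l) denotes the r×r contiguous submatrix of A whose upper-left corner is the entry a_{k,l} (and the determinant of a 0×0 matrix is 1). -/
open Matrix MvPolynomial Equiv

namespace DodgsonAux

/-- The map picking out the "middle" indices of `Fin (n+2)`. -/
def mid (n : ℕ) : Fin n → Fin (n + 2) := fun i => i.succ.castSucc

/-- `Unit ⊕ Fin n ≃ Fin (n+1)` sending `inl` to `0`. -/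
def uEquiv (n : ℕ) : Unit ⊕ Fin n ≃ Fin (n + 1) where
  toFun := Sum.elim (fun _ => 0) Fin.succ
  invFun := Fin.cases (Sum.inl ()) Sum.inr
  left_inv := by rintro (⟨⟩ | j) <;> simp
  right_inv := by
    intro k
    induction k using Fin.cases <;> simp

/-- `Unit ⊕ Fin n ≃ Fin (n+1)` sending `inl` to `last`. -/
def vEquiv (n : ℕ) : Unit ⊕ Fin n ≃ Fin (n + 1) where
  toFun := Sum.elim (fun _ => Fin.last n) Fin.castSucc
  invFun := Fin.lastCases (Sum.inl ()) Sum.inr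
  left_inv := by rintro (⟨⟩ | j) <;> simp
  right_inv := by
    intro k
    induction k using Fin.lastCases <;> simp

def e2 : Fin 2 ≃ Unit ⊕ Unit where
  toFun := ![Sum.inl (), Sum.inr ()]
  invFun := Sum.elim (fun _ => 0) (fun _ => 1)
  left_inv := by decide
  right_inv := by rintro (⟨⟩ | ⟨⟩) <;> rfl

/-- `Fin 2 ⊕ Fin n ≃ Fin (n+2)` sending `inl 0 ↦ 0`, `inl 1 ↦ last`, `inr j ↦ mid j`. -/
def wEquiv (n : ℕ) : Fin 2 ⊕ Fin n ≃ Fin (n + 2) :=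
  (e2.sumCongr (Equiv.refl (Fin n))).trans
    ((Equiv.sumAssoc Unit Unit (Fin n)).trans
      (((Equiv.refl Unit).sumCongr (vEquiv n)).trans (uEquiv (n + 1))))

@[simp] lemma uEquiv_inl (n : ℕ) (u : Unit) : uEquiv n (Sum.inl u) = 0 := rfl
@[simp] lemma uEquiv_inr (n : ℕ) (j : Fin n) : uEquiv n (Sum.inr j) = j.succ := rfl
@[simp] lemma vEquiv_inl (n : ℕ) (u : Unit) : vEquiv n (Sum.inl u) = Fin.last n := rfl
@[simp] lemma vEquiv_inr (n : ℕ) (j : Fin n) : vEquiv n (Sum.inr j) = j.castSucc := rfl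

@[simp] lemma wEquiv_inl_zero (n : ℕ) : wEquiv n (Sum.inl 0) = 0 := rfl

@[simp] lemma wEquiv_inl_one (n : ℕ) : wEquiv n (Sum.inl 1) = Fin.last (n + 1) := by
  show (Fin.last n).succ = Fin.last (n + 1)
  exact Fin.succ_last n

@[simp] lemma wEquiv_inr (n : ℕ) (j : Fin n) : wEquiv n (Sum.inr j) = mid n j := by
  show j.castSucc.succ = j.succ.castSucc
  exact Fin.succ_castSucc j

lemma mid_injective (n : ℕ) : Function.Injective (mid n) := fun i j h => by
  simpa [mid, Fin.castSucc_inj, Fin.succ_inj] using h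

/-- The corner map. -/
def cor (n : ℕ) : Fin 2 → Fin (n + 2) := ![0, Fin.last (n + 1)]

lemma key_field {K : Type*} [Field K] (n : ℕ)
    (A : Matrix (Fin (n + 2)) (Fin (n + 2)) K)
    (hD : IsUnit (A.submatrix (mid n) (mid n)).det) :
    A.det * (A.submatrix (mid n) (mid n)).det =
      (A.submatrix (Fin.castSucc : Fin (n + 1) → Fin (n + 2)) Fin.castSucc).det *
        (A.submatrix (Fin.succ : Fin (n + 1) → Fin (n + 2)) Fin.succ).det -
      (A.submatrix (Fin.castSucc : Fin (n + 1) → Fin (n + 2)) Fin.succ).det *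
        (A.submatrix (Fin.succ : Fin (n + 1) → Fin (n + 2)) Fin.castSucc).det := by
  set D : Matrix (Fin n) (Fin n) K := A.submatrix (mid n) (mid n) with hDdef
  haveI : Invertible D := D.invertibleOfIsUnitDet hD
  set P : Matrix (Fin 2) (Fin 2) K := A.submatrix (cor n) (cor n) with hP
  set Q : Matrix (Fin 2) (Fin n) K := A.submatrix (cor n) (mid n) with hQ
  set Rm : Matrix (Fin n) (Fin 2) K := A.submatrix (mid n) (cor n) with hRm
  set S : Matrix (Fin 2) (Fin 2) K := P - Q * ⅟D * Rm with hS
  -- auxiliary: entries of unit-indexed Schur complements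
  have entry : ∀ a b : Fin 2,
      (Q * ⅟D * Rm) a b =
        ((of fun (_ : Unit) j => A (cor n a) (mid n j)) * ⅟D *
          (of fun i (_ : Unit) => A (mid n i) (cor n b))) () () := by
    intro a b
    simp [Matrix.mul_apply, hQ, hRm]
  -- the full determinant
  have hA : A.det = D.det * S.det := by
    rw [← det_submatrix_equiv_self (wEquiv n) A]
    have hblocks : A.submatrix (wEquiv n) (wEquiv n) = fromBlocks P Q Rm D := by
      ext i j
      rcases i with i | i <;> rcases j with j | j
      · fin_cases i <;> fin_cases j <;> simp [fromBlocks, hP, cor]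
      · fin_cases i <;> simp [fromBlocks, hQ, cor, mid]
      · fin_cases j <;> simp [fromBlocks, hRm, cor, mid]
      · simp [fromBlocks, hDdef, mid]
    rw [hblocks, det_fromBlocks₂₂, ← hS]
  -- corner minors
  have h11 : (A.submatrix (Fin.castSucc : Fin (n + 1) → Fin (n + 2)) Fin.castSucc).det =
      D.det * S 0 0 := by
    rw [← det_submatrix_equiv_self (uEquiv n)]
    have hb : (A.submatrix (Fin.castSucc : Fin (n + 1) → Fin (n + 2))
          Fin.castSucc).submatrix (uEquiv n) (uEquiv n) =
        fromBlocks (of fun (_ _ : Unit) => A (cor n 0) (cor n 0))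
          (of fun (_ : Unit) j => A (cor n 0) (mid n j))
          (of fun i (_ : Unit) => A (mid n i) (cor n 0)) D := by
      ext i j
      rcases i with ⟨⟩ | i <;> rcases j with ⟨⟩ | j <;>
        simp [fromBlocks, hDdef, cor, mid]
    rw [hb, det_fromBlocks₂₂]
    congr 1
    rw [det_unique]
    simp [hS, hP, Matrix.sub_apply, Matrix.mul_apply, hQ, hRm]
  have h22 : (A.submatrix (Fin.succ : Fin (n + 1) → Fin (n + 2)) Fin.succ).det =
      D.det * S 1 1 := by
    rw [← det_submatrix_equiv_self (vEquiv n)]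
    have hb : (A.submatrix (Fin.succ : Fin (n + 1) → Fin (n + 2))
          Fin.succ).submatrix (vEquiv n) (vEquiv n) =
        fromBlocks (of fun (_ _ : Unit) => A (cor n 1) (cor n 1))
          (of fun (_ : Unit) j => A (cor n 1) (mid n j))
          (of fun i (_ : Unit) => A (mid n i) (cor n 1)) D := by
      ext i j
      rcases i with ⟨⟩ | i <;> rcases j with ⟨⟩ | j <;>
        simp [fromBlocks, hDdef, cor, mid, Fin.succ_last]
    rw [hb, det_fromBlocks₂₂]
    congr 1
    rw [det_unique]
    simp [hS, hP, Matrix.sub_apply, Matrix.mul_apply, hQ, hRm]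
  -- the permutation relating the two index equivalences
  set π : Equiv.Perm (Unit ⊕ Fin n) := (vEquiv n).trans (uEquiv n).symm with hπ
  set s : K := ((Equiv.Perm.sign π : ℤ) : K) with hs
  have hs2 : s * s = 1 := by
    rcases Int.units_eq_one_or (Equiv.Perm.sign π) with h | h <;>
      simp [hs, h]
  have h12 : s * (A.submatrix (Fin.castSucc : Fin (n + 1) → Fin (n + 2)) Fin.succ).det =
      D.det * S 0 1 := by
    have hsub : ((A.submatrix (Fin.castSucc : Fin (n + 1) → Fin (n + 2))
          Fin.succ).submatrix (uEquiv n) (uEquiv n)).submatrix id π =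
        fromBlocks (of fun (_ _ : Unit) => A (cor n 0) (cor n 1))
          (of fun (_ : Unit) j => A (cor n 0) (mid n j))
          (of fun i (_ : Unit) => A (mid n i) (cor n 1)) D := by
      ext i j
      rcases i with ⟨⟩ | i <;> rcases j with ⟨⟩ | j <;>
        simp [fromBlocks, hDdef, cor, mid, hπ, Fin.succ_last]
    have e1 : s * (A.submatrix (Fin.castSucc : Fin (n + 1) → Fin (n + 2)) Fin.succ).det =
        (((A.submatrix (Fin.castSucc : Fin (n + 1) → Fin (n + 2))
          Fin.succ).submatrix (uEquiv n) (uEquiv n)).submatrix id π).det := by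
      rw [det_permute' π, det_submatrix_equiv_self, hs]
    rw [e1, hsub, det_fromBlocks₂₂]
    congr 1
    rw [det_unique]
    simp [hS, hP, Matrix.sub_apply, Matrix.mul_apply, hQ, hRm]
  have h21 : s * (A.submatrix (Fin.succ : Fin (n + 1) → Fin (n + 2)) Fin.castSucc).det =
      D.det * S 1 0 := by
    have hsub : ((A.submatrix (Fin.succ : Fin (n + 1) → Fin (n + 2))
          Fin.castSucc).submatrix (vEquiv n) (vEquiv n)).submatrix id π.symm =
        fromBlocks (of fun (_ _ : Unit) => A (cor n 1) (cor n 0))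
          (of fun (_ : Unit) j => A (cor n 1) (mid n j))
          (of fun i (_ : Unit) => A (mid n i) (cor n 0)) D := by
      ext i j
      rcases i with ⟨⟩ | i <;> rcases j with ⟨⟩ | j <;>
        simp [fromBlocks, hDdef, cor, mid, hπ, Fin.succ_last]
    have hsgn : ((Equiv.Perm.sign π.symm : ℤ) : K) = s := by
      rw [hs, Equiv.Perm.sign_symm]
    have e1 : s * (A.submatrix (Fin.succ : Fin (n + 1) → Fin (n + 2)) Fin.castSucc).det =
        (((A.submatrix (Fin.succ : Fin (n + 1) → Fin (n + 2))
          Fin.castSucc).submatrix (vEquiv n) (vEquiv n)).submatrix id π.symm).det := by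
      rw [det_permute' π.symm, det_submatrix_equiv_self, hsgn]
    rw [e1, hsub, det_fromBlocks₂₂]
    congr 1
    rw [det_unique]
    simp [hS, hP, Matrix.sub_apply, Matrix.mul_apply, hQ, hRm]
  have hoff : (A.submatrix (Fin.castSucc : Fin (n + 1) → Fin (n + 2)) Fin.succ).det *
      (A.submatrix (Fin.succ : Fin (n + 1) → Fin (n + 2)) Fin.castSucc).det =
      (D.det * S 0 1) * (D.det * S 1 0) := by
    rw [← h12, ← h21, mul_mul_mul_comm, hs2, one_mul]
  rw [hA, h11, h22, hoff, det_fin_two S]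
  ring

lemma key_poly (n : ℕ) :
    (mvPolynomialX (Fin (n + 2)) (Fin (n + 2)) ℤ).det *
      ((mvPolynomialX (Fin (n + 2)) (Fin (n + 2)) ℤ).submatrix (mid n) (mid n)).det =
      ((mvPolynomialX (Fin (n + 2)) (Fin (n + 2)) ℤ).submatrix
          (Fin.castSucc : Fin (n + 1) → Fin (n + 2)) Fin.castSucc).det *
        ((mvPolynomialX (Fin (n + 2)) (Fin (n + 2)) ℤ).submatrix
          (Fin.succ : Fin (n + 1) → Fin (n + 2)) Fin.succ).det -
      ((mvPolynomialX (Fin (n + 2)) (Fin (n + 2)) ℤ).submatrix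
          (Fin.castSucc : Fin (n + 1) → Fin (n + 2)) Fin.succ).det *
        ((mvPolynomialX (Fin (n + 2)) (Fin (n + 2)) ℤ).submatrix
          (Fin.succ : Fin (n + 1) → Fin (n + 2)) Fin.castSucc).det := by
  set X : Matrix (Fin (n + 2)) (Fin (n + 2)) (MvPolynomial (Fin (n + 2) × Fin (n + 2)) ℤ) :=
    mvPolynomialX (Fin (n + 2)) (Fin (n + 2)) ℤ with hX
  have hinj : Function.Injective (algebraMap (MvPolynomial (Fin (n + 2) × Fin (n + 2)) ℤ)
      (FractionRing (MvPolynomial (Fin (n + 2) × Fin (n + 2)) ℤ))) :=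
    IsFractionRing.injective _ _
  -- the central minor of the generic matrix is nonzero
  have h0 : (X.submatrix (mid n) (mid n)).det ≠ 0 := by
    intro h
    have h1 : (MvPolynomial.eval
        (fun p : Fin (n + 2) × Fin (n + 2) => if p.1 = p.2 then (1 : ℤ) else 0))
        (X.submatrix (mid n) (mid n)).det = 1 := by
      rw [RingHom.map_det, RingHom.mapMatrix_apply]
      have : ((X.submatrix (mid n) (mid n)).map (MvPolynomial.eval
          (fun p : Fin (n + 2) × Fin (n + 2) => if p.1 = p.2 then (1 : ℤ) else 0))) =
          (1 : Matrix (Fin n) (Fin n) ℤ) := by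
        ext i j
        by_cases hij : i = j <;>
          simp [hX, Matrix.one_apply, hij, (mid_injective n).eq_iff]
      rw [this, det_one]
    rw [h, map_zero] at h1
    exact zero_ne_one h1
  set Y : Matrix (Fin (n + 2)) (Fin (n + 2))
      (FractionRing (MvPolynomial (Fin (n + 2) × Fin (n + 2)) ℤ)) :=
    X.map (algebraMap _ _) with hY
  have hDmap : ∀ (k : ℕ) (f g : Fin k → Fin (n + 2)), (Y.submatrix f g).det =
      algebraMap _ _ (X.submatrix f g).det := by
    intro k f g
    rw [hY, Matrix.submatrix_map, ← RingHom.mapMatrix_apply, ← RingHom.map_det]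
  have hD : IsUnit (Y.submatrix (mid n) (mid n)).det := by
    rw [isUnit_iff_ne_zero, hDmap]
    
    intro h
    exact h0 (hinj (by rw [h, map_zero]))
  have hk := key_field n Y hD
  have hYdet : Y.det = algebraMap _ _ X.det := by
    rw [hY, ← RingHom.mapMatrix_apply, ← RingHom.map_det]
  apply hinj
  simp only [_root_.map_mul, _root_.map_sub]
  rw [← hYdet, ← hDmap n, ← hDmap (n + 1), ← hDmap (n + 1), ← hDmap (n + 1), ← hDmap (n + 1)]
  exact hk

end DodgsonAux

theorem dodgson_condensation_comm_ring {R : Type*} [CommRing R] (n : ℕ)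
    (A : Matrix (Fin (n + 2)) (Fin (n + 2)) R) :
    A.det * (A.submatrix (fun i : Fin n => i.succ.castSucc)
        (fun j : Fin n => j.succ.castSucc)).det =
      (A.submatrix (Fin.castSucc : Fin (n + 1) → Fin (n + 2)) Fin.castSucc).det *
        (A.submatrix (Fin.succ : Fin (n + 1) → Fin (n + 2)) Fin.succ).det -
      (A.submatrix (Fin.castSucc : Fin (n + 1) → Fin (n + 2)) Fin.succ).det *
        (A.submatrix (Fin.succ : Fin (n + 1) → Fin (n + 2)) Fin.castSucc).det := by
  have hk := DodgsonAux.key_poly n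
  set X := Matrix.mvPolynomialX (Fin (n + 2)) (Fin (n + 2)) ℤ with hX
  let φ : MvPolynomial (Fin (n + 2) × Fin (n + 2)) ℤ →+* R :=
    MvPolynomial.eval₂Hom (Int.castRingHom R) fun p => A p.1 p.2
  have hXA : X.map φ = A := Matrix.mvPolynomialX_map_eval₂ _ A
  have := congrArg φ hk
  simp only [_root_.map_mul, _root_.map_sub, RingHom.map_det, RingHom.mapMatrix_apply,
    ← Matrix.submatrix_map, hXA] at this
  exact this
end
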